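/- Let D₁ and D₂ be distortion functions with corresponding probability measures Q₁ and Q₂ on the Borel sets of (0,1). If there exists δ ∈ (0,1) such that D₁(u) ≤ D₂(u) for every u ∈ [δ,1), then 𝓛_{Q₁} ⊆ 𝓛_{Q₂}. -/

import Mathlib

open MeasureTheory

/-- The distribution function `F_X(x) = P[X ≤ x]` of a random variable `X`. -/
noncomputable def distFun {Ω : Type*} [MeasurableSpace Ω] (P : Measure Ω) (X : Ω → ℝ) (x : ℝ) : ℝ :=
  (P {ω | X ω ≤ x}).toReal

/-- The (lower) quantile function `F^←_X(u) = inf {x | F_X(x) ≥ u}`. -/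
noncomputable def quantile {Ω : Type*} [MeasurableSpace Ω] (P : Measure Ω) (X : Ω → ℝ) (u : ℝ) : ℝ :=
  sInf {x : ℝ | u ≤ distFun P X x}

/-- A distortion function: an increasing, right-continuous `D : [0,1] → [0,1]`
with `D 0 = 0` and `sup_{u ∈ (0,1)} D u = 1`. -/
structure IsDistortion (D : ℝ → ℝ) : Prop where
  mapsTo : ∀ u ∈ Set.Icc (0:ℝ) 1, D u ∈ Set.Icc (0:ℝ) 1
  mono : ∀ ⦃a b : ℝ⦄, 0 ≤ a → a ≤ b → b ≤ 1 → D a ≤ D b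
  rightCont : ∀ u ∈ Set.Ico (0:ℝ) 1, ContinuousWithinAt D (Set.Icc u 1) u
  zero : D 0 = 0
  sup_one : sSup (D '' Set.Ioo 0 1) = 1

/-- `Q` is the probability measure on the Borel sets of `(0,1)` corresponding to
the distortion function `D`, i.e. `Q (a,b] = D b - D a` for `0 < a ≤ b < 1`. -/
def IsCorresponding (D : ℝ → ℝ) (Q : Measure ℝ) : Prop :=
  IsProbabilityMeasure Q ∧ Q (Set.Ioo (0:ℝ) 1) = 1 ∧
    ∀ a b : ℝ, 0 < a → a ≤ b → b < 1 → Q (Set.Ioc a b) = ENNReal.ofReal (D b - D a)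

/-- `X ∈ 𝓛_Q`, i.e. `∫_{(0,1)} (F^←_X(u))⁺ dQ(u) < ∞`. -/
def memLQ {Ω : Type*} [MeasurableSpace Ω] (P : Measure Ω) (Q : Measure ℝ) (X : Ω → ℝ) : Prop :=
  ∫⁻ u in Set.Ioo (0:ℝ) 1, ENNReal.ofReal (max (quantile P X u) 0) ∂Q < ⊤

/-- The quantile risk measure
`ϱ_Q[X] = ∫_{(0,1)} (F^←_X(u))⁺ dQ(u) - ∫_{(0,1)} (F^←_X(u))⁻ dQ(u)`, with values in `EReal`. -/
noncomputable def rho {Ω : Type*} [MeasurableSpace Ω] (P : Measure Ω) (Q : Measure ℝ)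
    (X : Ω → ℝ) : EReal :=
  ((∫⁻ u in Set.Ioo (0:ℝ) 1, ENNReal.ofReal (max (quantile P X u) 0) ∂Q) : EReal)
    - ((∫⁻ u in Set.Ioo (0:ℝ) 1, ENNReal.ofReal (max (-(quantile P X u)) 0) ∂Q) : EReal)

section aux

variable {Ω : Type*} [MeasurableSpace Ω] {P : Measure Ω} [IsProbabilityMeasure P] {X : Ω → ℝ}

lemma distFun_mono' : Monotone (distFun P X) := fun a b hab =>
  ENNReal.toReal_mono (measure_ne_top P _) (measure_mono fun ω h => le_trans h hab)

lemma bddBelow_quantile_set (hX : Measurable X) {u : ℝ} (hu : 0 < u) :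
    BddBelow {x : ℝ | u ≤ distFun P X x} := by
  have hanti : Antitone (fun n : ℕ => {ω | X ω ≤ (-n : ℝ)}) := fun m n hmn ω h =>
    show X ω ≤ -(m:ℝ) from le_trans h (neg_le_neg (Nat.cast_le.2 hmn))
  have hempty : ⋂ n : ℕ, {ω | X ω ≤ (-n : ℝ)} = ∅ := by
    ext ω
    simp only [Set.mem_iInter, Set.mem_setOf_eq, Set.mem_empty_iff_false, iff_false, not_forall,
      not_le]
    obtain ⟨n, hn⟩ := exists_nat_gt (-X ω)
    exact ⟨n, by linarith⟩
  have htend := tendsto_measure_iInter_atTop (μ := P) (s := fun n : ℕ => {ω | X ω ≤ (-n : ℝ)})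
    (fun n => (hX measurableSet_Iic).nullMeasurableSet) hanti ⟨0, measure_ne_top P _⟩
  rw [hempty, measure_empty] at htend
  have : ∀ᶠ n : ℕ in Filter.atTop, P {ω | X ω ≤ (-n : ℝ)} < ENNReal.ofReal u :=
    htend.eventually (gt_mem_nhds (by simp [ENNReal.ofReal_pos.2 hu]))
  obtain ⟨n, hn⟩ := this.exists
  refine ⟨(-n : ℝ), fun x hx => ?_⟩
  by_contra hlt
  push_neg at hlt
  have h1 : distFun P X x ≤ distFun P X (-n) := distFun_mono' hlt.le
  have h2 : distFun P X (-n) < u := ENNReal.toReal_lt_of_lt_ofReal hn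
  exact absurd (le_trans hx h1) (not_le.2 h2)

lemma nonempty_quantile_set {v : ℝ} (hv : v < 1) :
    {x : ℝ | v ≤ distFun P X x}.Nonempty := by
  have hmono : Monotone (fun n : ℕ => {ω | X ω ≤ (n : ℝ)}) := fun m n hmn ω h =>
    show X ω ≤ (n:ℝ) from le_trans h (Nat.cast_le.2 hmn)
  have huniv : ⋃ n : ℕ, {ω | X ω ≤ (n : ℝ)} = Set.univ := by
    ext ω
    simp only [Set.mem_iUnion, Set.mem_setOf_eq, Set.mem_univ, iff_true]
    obtain ⟨n, hn⟩ := exists_nat_gt (X ω)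
    exact ⟨n, hn.le⟩
  have htend := tendsto_measure_iUnion_atTop (μ := P) hmono
  rw [huniv, measure_univ] at htend
  have hv1 : ENNReal.ofReal v < 1 := by
    rcases le_or_gt v 0 with h | h
    · simp [ENNReal.ofReal_eq_zero.2 h]
    · exact ENNReal.ofReal_lt_one.2 hv
  have : ∀ᶠ n : ℕ in Filter.atTop, ENNReal.ofReal v < P {ω | X ω ≤ (n : ℝ)} :=
    htend.eventually (lt_mem_nhds hv1)
  obtain ⟨n, hn⟩ := this.exists
  exact ⟨(n : ℝ), (ENNReal.ofReal_le_iff_le_toReal (measure_ne_top P _)).1 hn.le⟩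

lemma quantile_mono (hX : Measurable X) {u v : ℝ} (hu : 0 < u) (huv : u ≤ v) (hv : v < 1) :
    quantile P X u ≤ quantile P X v :=
  csInf_le_csInf (bddBelow_quantile_set hX hu) (nonempty_quantile_set hv)
    (fun x hx => le_trans huv hx)

lemma aemeas_qmax (hX : Measurable X) (Q : Measure ℝ) {δ : ℝ} (hδ0 : 0 < δ) :
    AEMeasurable (fun u => max (quantile P X u) 0) (Q.restrict (Set.Ioo δ 1)) := by
  set g : ℝ → ℝ := fun u => max (quantile P X u) 0 with hg
  have gmono : ∀ u ∈ Set.Ioo (0:ℝ) 1, ∀ v ∈ Set.Ioo (0:ℝ) 1, u ≤ v → g u ≤ g v :=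
    fun u hu v hv huv => max_le_max (quantile_mono hX hu.1 huv hv.2) le_rfl
  set G : ℝ → ENNReal := fun u => ⨆ v ∈ Set.Ioo (0:ℝ) 1 ∩ Set.Iic u, ENNReal.ofReal (g v) with hG
  have hGmono : Monotone G := fun u v huv =>
    biSup_mono fun x hx => ⟨hx.1, hx.2.trans huv⟩
  have hGeq : ∀ u ∈ Set.Ioo (0:ℝ) 1, G u = ENNReal.ofReal (g u) := by
    intro u hu
    apply le_antisymm
    · exact iSup₂_le fun v hv => ENNReal.ofReal_le_ofReal (gmono v hv.1 u hu hv.2)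
    · have hmem : u ∈ Set.Ioo (0:ℝ) 1 ∩ Set.Iic u := ⟨hu, Set.self_mem_Iic⟩
      rw [hG]
      exact le_biSup (fun v => ENNReal.ofReal (g v)) hmem
  have hofReal : AEMeasurable (fun u => ENNReal.ofReal (g u)) (Q.restrict (Set.Ioo δ 1)) := by
    refine ⟨G, hGmono.measurable, ?_⟩
    filter_upwards [ae_restrict_mem measurableSet_Ioo] with u hu
    exact (hGeq u ⟨lt_trans hδ0 hu.1, hu.2⟩).symm
  have := ENNReal.measurable_toReal.comp_aemeasurable hofReal
  refine this.congr (Filter.Eventually.of_forall fun u => ?_)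
  exact ENNReal.toReal_ofReal (le_max_right _ _)

end aux

section corr

variable {D : ℝ → ℝ} {Q : Measure ℝ}

lemma corr_Ioc_zero (hD : IsDistortion D) (hQ : IsCorresponding D Q) {c : ℝ}
    (hc : c ∈ Set.Ioo (0:ℝ) 1) : Q (Set.Ioc 0 c) = ENNReal.ofReal (D c) := by
  obtain ⟨hP, h01, hIoc⟩ := hQ
  set a : ℕ → ℝ := fun n => c / (n + 2) with ha_def
  have ha_pos : ∀ n, 0 < a n := fun n => div_pos hc.1 (by positivity)
  have ha_le : ∀ n, a n ≤ c := fun n => by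
    rw [ha_def, div_le_iff₀ (by positivity)]
    nlinarith [hc.1.le]
  have hmono : Monotone (fun n : ℕ => Set.Ioc (a n) c) := by
    intro m n hmn
    apply Set.Ioc_subset_Ioc_left
    apply div_le_div_of_nonneg_left hc.1.le (by positivity)
    have : (m : ℝ) ≤ n := Nat.cast_le.2 hmn
    linarith
  have hunion : ⋃ n, Set.Ioc (a n) c = Set.Ioc 0 c := by
    ext x
    simp only [Set.mem_iUnion, Set.mem_Ioc]
    constructor
    · rintro ⟨n, h1, h2⟩
      exact ⟨lt_trans (ha_pos n) h1, h2⟩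
    · rintro ⟨hx0, hxc⟩
      obtain ⟨n, hn⟩ := exists_nat_gt (c / x)
      refine ⟨n, ?_, hxc⟩
      rw [ha_def]
      rw [div_lt_iff₀ (by positivity)]
      have h1 : c < x * n := by
        have := (div_lt_iff₀ hx0).1 hn
        linarith
      nlinarith [hx0.le]
  have htend := tendsto_measure_iUnion_atTop (μ := Q) hmono
  rw [hunion] at htend
  have htend' : Filter.Tendsto (fun n => ENNReal.ofReal (D c - D (a n))) Filter.atTop
      (nhds (Q (Set.Ioc 0 c))) := by
    refine htend.congr fun n => ?_
    exact hIoc (a n) c (ha_pos n) (ha_le n) hc.2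
  have haz : Filter.Tendsto a Filter.atTop (nhds 0) := by
    rw [ha_def]
    have h2 : Filter.Tendsto (fun n : ℕ => ((n : ℝ) + 2)) Filter.atTop Filter.atTop :=
      Filter.tendsto_atTop_add_const_right _ 2 tendsto_natCast_atTop_atTop
    exact Filter.Tendsto.div_atTop tendsto_const_nhds h2
  have hDa : Filter.Tendsto (fun n => D (a n)) Filter.atTop (nhds 0) := by
    have hrc := hD.rightCont 0 ⟨le_refl 0, one_pos⟩
    have hwithin : Filter.Tendsto a Filter.atTop (nhdsWithin 0 (Set.Icc 0 1)) :=
      tendsto_nhdsWithin_of_tendsto_nhds_of_eventually_within a haz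
        (Filter.Eventually.of_forall fun n => ⟨(ha_pos n).le, (ha_le n).trans hc.2.le⟩)
    simpa [hD.zero, Function.comp_def] using hrc.tendsto.comp hwithin
  have hlim : Filter.Tendsto (fun n => ENNReal.ofReal (D c - D (a n))) Filter.atTop
      (nhds (ENNReal.ofReal (D c))) := by
    have : Filter.Tendsto (fun n => D c - D (a n)) Filter.atTop (nhds (D c - 0)) :=
      tendsto_const_nhds.sub hDa
    rw [sub_zero] at this
    exact (ENNReal.continuous_ofReal.tendsto _).comp this
  exact tendsto_nhds_unique htend' hlim

lemma corr_Ioo_top (hD : IsDistortion D) (hQ : IsCorresponding D Q) {c : ℝ}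
    (hc : c ∈ Set.Ioo (0:ℝ) 1) : Q (Set.Ioo c 1) = 1 - ENNReal.ofReal (D c) := by
  have hsplit : Set.Ioc 0 c ∪ Set.Ioo c 1 = Set.Ioo (0:ℝ) 1 :=
    Set.Ioc_union_Ioo_eq_Ioo hc.1.le hc.2
  have hdisj : Disjoint (Set.Ioc (0:ℝ) c) (Set.Ioo c 1) := by
    rw [Set.disjoint_left]
    rintro x ⟨_, h1⟩ ⟨h2, _⟩
    exact absurd h2 (not_lt.2 h1)
  have := measure_union (μ := Q) hdisj measurableSet_Ioo
  rw [hsplit, hQ.2.1, corr_Ioc_zero hD hQ hc] at this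
  exact (ENNReal.eq_sub_of_add_eq ENNReal.ofReal_ne_top
    (by rw [add_comm]; exact this.symm)).symm |>.symm

end corr

section compare
variable {D₁ D₂ : ℝ → ℝ} {Q₁ Q₂ : Measure ℝ} {δ : ℝ}

lemma tail_Ioo_le (hD₁ : IsDistortion D₁) (hQ₁ : IsCorresponding D₁ Q₁)
    (hD₂ : IsDistortion D₂) (hQ₂ : IsCorresponding D₂ Q₂)
    (hδ : δ ∈ Set.Ioo (0:ℝ) 1) (hle : ∀ u ∈ Set.Ico δ 1, D₁ u ≤ D₂ u)
    {c : ℝ} (hc : c ∈ Set.Ico δ 1) : Q₂ (Set.Ioo c 1) ≤ Q₁ (Set.Ioo c 1) := by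
  have hc' : c ∈ Set.Ioo (0:ℝ) 1 := ⟨lt_of_lt_of_le hδ.1 hc.1, hc.2⟩
  rw [corr_Ioo_top hD₁ hQ₁ hc', corr_Ioo_top hD₂ hQ₂ hc']
  exact tsub_le_tsub_left (ENNReal.ofReal_le_ofReal (hle c hc)) 1

lemma tail_Ico_le (hD₁ : IsDistortion D₁) (hQ₁ : IsCorresponding D₁ Q₁)
    (hD₂ : IsDistortion D₂) (hQ₂ : IsCorresponding D₂ Q₂)
    (hδ : δ ∈ Set.Ioo (0:ℝ) 1) (hle : ∀ u ∈ Set.Ico δ 1, D₁ u ≤ D₂ u)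
    {c : ℝ} (hcδ : δ < c) (hc1 : c < 1) : Q₂ (Set.Ico c 1) ≤ Q₁ (Set.Ico c 1) := by
  haveI := hQ₁.1; haveI := hQ₂.1
  set a : ℕ → ℝ := fun n => c - (c - δ) / (n + 1) with ha_def
  have hcd : 0 < c - δ := sub_pos.2 hcδ
  have ha_lt : ∀ n, a n < c := fun n => sub_lt_self _ (div_pos hcd (by positivity))
  have ha_ge : ∀ n, δ ≤ a n := fun n => by
    rw [ha_def]
    have h1 : (c - δ) / (n + 1) ≤ c - δ := by
      rw [div_le_iff₀ (by positivity)]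
      nlinarith [hcd.le]
    simp only
    linarith
  have ha_mono : Monotone a := by
    intro m n hmn
    rw [ha_def]
    simp only
    have h2 : (c - δ) / (n + 1) ≤ (c - δ) / (m + 1) := by
      apply div_le_div_of_nonneg_left hcd.le (by positivity)
      have : (m : ℝ) ≤ n := Nat.cast_le.2 hmn
      linarith
    linarith
  have hanti : Antitone (fun n : ℕ => Set.Ioo (a n) 1) := fun m n hmn =>
    Set.Ioo_subset_Ioo_left (ha_mono hmn)
  have hiInter : ⋂ n, Set.Ioo (a n) 1 = Set.Ico c 1 := by
    ext x
    simp only [Set.mem_iInter, Set.mem_Ioo, Set.mem_Ico]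
    constructor
    · rintro h
      refine ⟨?_, (h 0).2⟩
      by_contra hxc
      push_neg at hxc
      obtain ⟨n, hn⟩ := exists_nat_gt ((c - δ) / (c - x))
      have hcx : 0 < c - x := sub_pos.2 hxc
      have h1 : (c - δ) / (n + 1) < c - x := by
        rw [div_lt_iff₀ (by positivity)]
        have h2 := (div_lt_iff₀ hcx).1 hn
        nlinarith [hcx.le]
      have := (h n).1
      rw [ha_def] at this
      simp only at this
      linarith
    · rintro ⟨hcx, hx1⟩ n
      exact ⟨lt_of_lt_of_le (ha_lt n) hcx, hx1⟩
  have ht1 := tendsto_measure_iInter_atTop (μ := Q₁) (s := fun n : ℕ => Set.Ioo (a n) 1)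
    (fun n => measurableSet_Ioo.nullMeasurableSet) hanti ⟨0, measure_ne_top Q₁ _⟩
  have ht2 := tendsto_measure_iInter_atTop (μ := Q₂) (s := fun n : ℕ => Set.Ioo (a n) 1)
    (fun n => measurableSet_Ioo.nullMeasurableSet) hanti ⟨0, measure_ne_top Q₂ _⟩
  rw [hiInter] at ht1 ht2
  refine le_of_tendsto_of_tendsto' ht2 ht1 fun n => ?_
  exact tail_Ioo_le hD₁ hQ₁ hD₂ hQ₂ hδ hle ⟨ha_ge n, lt_trans (ha_lt n) hc1⟩

lemma upper_meas_le (hD₁ : IsDistortion D₁) (hQ₁ : IsCorresponding D₁ Q₁)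
    (hD₂ : IsDistortion D₂) (hQ₂ : IsCorresponding D₂ Q₂)
    (hδ : δ ∈ Set.Ioo (0:ℝ) 1) (hle : ∀ u ∈ Set.Ico δ 1, D₁ u ≤ D₂ u)
    {A : Set ℝ} (hA : A ⊆ Set.Ioo δ 1)
    (hup : ∀ u ∈ A, ∀ v ∈ Set.Ioo δ 1, u ≤ v → v ∈ A) : Q₂ A ≤ Q₁ A := by
  rcases A.eq_empty_or_nonempty with rfl | hne
  · simp
  set c := sInf A with hc_def
  have hbdd : BddBelow A := ⟨δ, fun x hx => (hA hx).1.le⟩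
  have hcδ : δ ≤ c := le_csInf hne fun x hx => (hA hx).1.le
  obtain ⟨x₀, hx₀⟩ := id hne
  have hc1 : c < 1 := lt_of_le_of_lt (csInf_le hbdd hx₀) (hA hx₀).2
  by_cases hcA : c ∈ A
  · have hcδ' : δ < c := (hA hcA).1
    have hAeq : A = Set.Ico c 1 := by
      apply Set.Subset.antisymm
      · exact fun x hx => ⟨csInf_le hbdd hx, (hA hx).2⟩
      · rintro v ⟨hcv, hv1⟩
        exact hup c hcA v ⟨lt_of_lt_of_le hcδ' hcv, hv1⟩ hcv
    rw [hAeq]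
    exact tail_Ico_le hD₁ hQ₁ hD₂ hQ₂ hδ hle hcδ' hc1
  · have hAeq : A = Set.Ioo c 1 := by
      apply Set.Subset.antisymm
      · intro x hx
        refine ⟨lt_of_le_of_ne (csInf_le hbdd hx) ?_, (hA hx).2⟩
        rintro rfl
        exact hcA hx
      · rintro v ⟨hcv, hv1⟩
        obtain ⟨x, hxA, hxv⟩ := exists_lt_of_csInf_lt hne hcv
        exact hup x hxA v ⟨lt_of_le_of_lt hcδ hcv, hv1⟩ hxv.le
    rw [hAeq]
    exact tail_Ioo_le hD₁ hQ₁ hD₂ hQ₂ hδ hle ⟨hcδ, hc1⟩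

end compare

/-- If `D₁ ≤ D₂` on `[δ,1)` for some `δ ∈ (0,1)`, then `𝓛_{Q₁} ⊆ 𝓛_{Q₂}`. -/
theorem memLQ_mono_of_le_on_Ico {Ω : Type*} [MeasurableSpace Ω]
    (P : Measure Ω) [IsProbabilityMeasure P]
    (D₁ D₂ : ℝ → ℝ) (Q₁ Q₂ : Measure ℝ)
    (hD₁ : IsDistortion D₁) (hQ₁ : IsCorresponding D₁ Q₁)
    (hD₂ : IsDistortion D₂) (hQ₂ : IsCorresponding D₂ Q₂)
    (δ : ℝ) (hδ : δ ∈ Set.Ioo (0:ℝ) 1) (hle : ∀ u ∈ Set.Ico δ 1, D₁ u ≤ D₂ u) :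
    ∀ X : Ω → ℝ, Measurable X → memLQ P Q₁ X → memLQ P Q₂ X := by
  intro X hX hmem
  haveI := hQ₁.1; haveI := hQ₂.1
  unfold memLQ at hmem ⊢
  set g : ℝ → ℝ := fun u => max (quantile P X u) 0 with hg
  have gmono : ∀ u ∈ Set.Ioo (0:ℝ) 1, ∀ v ∈ Set.Ioo (0:ℝ) 1, u ≤ v → g u ≤ g v :=
    fun u hu v hv huv => max_le_max (quantile_mono hX hu.1 huv hv.2) le_rfl
  have hsplit : Set.Ioc 0 δ ∪ Set.Ioo δ 1 = Set.Ioo (0:ℝ) 1 :=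
    Set.Ioc_union_Ioo_eq_Ioo hδ.1.le hδ.2
  have hdisj : Disjoint (Set.Ioc (0:ℝ) δ) (Set.Ioo δ 1) := by
    rw [Set.disjoint_left]
    rintro x ⟨_, h1⟩ ⟨h2, _⟩
    exact absurd h2 (not_lt.2 h1)
  rw [← hsplit, lintegral_union measurableSet_Ioo hdisj]
  refine ENNReal.add_lt_top.2 ⟨?_, ?_⟩
  · calc ∫⁻ u in Set.Ioc 0 δ, ENNReal.ofReal (g u) ∂Q₂
        ≤ ∫⁻ _ in Set.Ioc 0 δ, ENNReal.ofReal (g δ) ∂Q₂ := by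
          apply setLIntegral_mono measurable_const
          intro u hu
          exact ENNReal.ofReal_le_ofReal
            (gmono u ⟨hu.1, lt_of_le_of_lt hu.2 hδ.2⟩ δ hδ hu.2)
      _ = ENNReal.ofReal (g δ) * Q₂ (Set.Ioc 0 δ) := setLIntegral_const _ _
      _ < ⊤ := ENNReal.mul_lt_top ENNReal.ofReal_lt_top (measure_lt_top Q₂ _)
  · have hnn : ∀ (μ : Measure ℝ), 0 ≤ᵐ[μ.restrict (Set.Ioo δ 1)] g := fun μ =>
      Filter.Eventually.of_forall fun u => le_max_right _ _
    have key₂ := lintegral_eq_lintegral_meas_lt (Q₂.restrict (Set.Ioo δ 1)) (hnn Q₂)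
      (aemeas_qmax hX Q₂ hδ.1)
    have key₁ := lintegral_eq_lintegral_meas_lt (Q₁.restrict (Set.Ioo δ 1)) (hnn Q₁)
      (aemeas_qmax hX Q₁ hδ.1)
    calc ∫⁻ u in Set.Ioo δ 1, ENNReal.ofReal (g u) ∂Q₂
        = ∫⁻ t in Set.Ioi (0:ℝ), Q₂ ({a | t < g a} ∩ Set.Ioo δ 1) := by
          rw [key₂]
          simp_rw [Measure.restrict_apply' measurableSet_Ioo]
      _ ≤ ∫⁻ t in Set.Ioi (0:ℝ), Q₁ ({a | t < g a} ∩ Set.Ioo δ 1) := by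
          apply lintegral_mono
          intro t
          apply upper_meas_le hD₁ hQ₁ hD₂ hQ₂ hδ hle Set.inter_subset_right
          rintro u ⟨htu, hu⟩ v hv huv
          refine ⟨show t < g v from lt_of_lt_of_le htu ?_, hv⟩
          exact gmono u ⟨lt_trans hδ.1 hu.1, hu.2⟩ v ⟨lt_trans hδ.1 hv.1, hv.2⟩ huv
      _ = ∫⁻ u in Set.Ioo δ 1, ENNReal.ofReal (g u) ∂Q₁ := by
          rw [key₁]
          simp_rw [Measure.restrict_apply' measurableSet_Ioo]
      _ ≤ ∫⁻ u in Set.Ioo 0 1, ENNReal.ofReal (g u) ∂Q₁ :=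
          lintegral_mono_set (Set.Ioo_subset_Ioo_left hδ.1.le)
      _ < ⊤ := hmem
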